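/- arXiv:1407.8094 — 6 statements merged into one kernel-verified Lean document; each statement's English description precedes it below -/
import Mathlib

section
/- Let A be a nonempty bounded subset of ℝ^N, let δ > 0, and let γ be a real number with γ < N - dim_B̄(A), where dim_B̄(A) is the upper box (Minkowski) dimension of A. Then the integral ∫_{A_δ} d(x,A)^{-γ} dx is finite, where A_δ is the open δ-neighborhood of A and d(x,A) is the Euclidean distance from x to A. -/
open MeasureTheory Metric Filter Set Topology

/-- The upper `r`-dimensional Minkowski content of `A ⊆ ℝ^N`:
`limsup_{t→0+} |A_t| / t^(N-r)`. -/
noncomputable def upperMinkowskiContent (N : ℕ) (A : Set (EuclideanSpace ℝ (Fin N)))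
    (r : ℝ) : ENNReal :=
  Filter.limsup
    (fun t : ℝ => volume (Metric.thickening t A) / ENNReal.ofReal (t ^ ((N : ℝ) - r)))
    (nhdsWithin 0 (Set.Ioi 0))

/-- The upper box (Minkowski) dimension of `A ⊆ ℝ^N`. -/
noncomputable def upperBoxDim (N : ℕ) (A : Set (EuclideanSpace ℝ (Fin N))) : ℝ :=
  sInf {r : ℝ | upperMinkowskiContent N A r = 0}

lemma hp_alg (T b s γ : ℝ) (hT : 0 < T) (hb : 0 < b) (k : ℕ) :
    (T * b ^ (k+1)) ^ (-γ) * (T * b ^ k) ^ s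
      = (T ^ (s - γ) * b ^ (-γ)) * (b ^ (s - γ)) ^ k := by
  induction k with
  | zero =>
      rw [pow_zero, mul_one, zero_add, pow_one, pow_zero, mul_one,
        Real.mul_rpow hT.le hb.le, show s - γ = -γ + s from by ring, Real.rpow_add hT]
      ring
  | succ k ih =>
      have e1 : (T * b ^ (k+1+1)) ^ (-γ) = (T * b ^ (k+1)) ^ (-γ) * b ^ (-γ) := by
        rw [show T * b ^ (k+1+1) = (T * b ^ (k+1)) * b from by ring,
          Real.mul_rpow (by positivity) hb.le]
      have e2 : (T * b ^ (k+1)) ^ s = (T * b ^ k) ^ s * b ^ s := by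
        rw [show T * b ^ (k+1) = (T * b ^ k) * b from by ring,
          Real.mul_rpow (by positivity) hb.le]
      calc (T * b ^ (k+1+1)) ^ (-γ) * (T * b ^ (k+1)) ^ s
          = ((T * b ^ (k+1)) ^ (-γ) * (T * b ^ k) ^ s) * (b ^ (-γ) * b ^ s) := by
            rw [e1, e2]; ring
        _ = ((T ^ (s-γ) * b ^ (-γ)) * (b ^ (s-γ)) ^ k) * b ^ (s - γ) := by
            rw [ih, ← Real.rpow_add hb, show -γ + s = s - γ from by ring]
        _ = (T ^ (s-γ) * b ^ (-γ)) * (b ^ (s-γ)) ^ (k+1) := by ring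

/-- Harvey–Polking: if `γ < N - dim_B̄ A`, then `∫_{A_δ} d(x,A)^{-γ} dx < ∞`. -/
theorem stmt_0 (N : ℕ) (A : Set (EuclideanSpace ℝ (Fin N))) (hA : A.Nonempty)
    (hAb : Bornology.IsBounded A) (δ : ℝ) (hδ : 0 < δ) (γ : ℝ)
    (hγ : γ < (N : ℝ) - upperBoxDim N A) :
    ∫⁻ x in Metric.thickening δ A, ENNReal.ofReal (Metric.infDist x A ^ (-γ)) < ⊤ := by
  have hfin : ∀ η : ℝ, volume (thickening η A) < ⊤ :=
    fun η => (hAb.thickening).measure_lt_top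
  -- the set of exponents with zero content
  set S := {r : ℝ | upperMinkowskiContent N A r = 0} with hSdef
  have hSne : ((N:ℝ)+1) ∈ S := by
    simp only [hSdef, mem_setOf_eq]
    have hV : volume (thickening 1 A) ≠ ⊤ := (hAb.thickening).measure_lt_top.ne
    have hle : ∀ᶠ t in 𝓝[>](0:ℝ),
        volume (thickening t A) / ENNReal.ofReal (t ^ ((N:ℝ) - ((N:ℝ)+1)))
          ≤ volume (thickening 1 A) * ENNReal.ofReal t := by
      filter_upwards [Ioo_mem_nhdsGT_of_mem (by simp : (0:ℝ) ∈ Ico (0:ℝ) 1)] with t ht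
      have he : ((N:ℝ) - ((N:ℝ)+1)) = -1 := by ring
      rw [he, Real.rpow_neg_one, ENNReal.ofReal_inv_of_pos ht.1, div_eq_mul_inv, inv_inv]
      exact mul_le_mul' (measure_mono (thickening_mono ht.2.le A)) le_rfl
    have hlim : Tendsto (fun t : ℝ => volume (thickening 1 A) * ENNReal.ofReal t)
        (𝓝[>](0:ℝ)) (𝓝 0) := by
      have h1 : Tendsto (fun t:ℝ => ENNReal.ofReal t) (𝓝[>](0:ℝ)) (𝓝 0) := by
        have := (ENNReal.continuous_ofReal.tendsto 0).mono_left
          (nhdsWithin_le_nhds (s := Ioi (0:ℝ)))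
        simpa using this
      have := ENNReal.Tendsto.const_mul h1 (Or.inr hV)
      simpa using this
    unfold upperMinkowskiContent
    exact le_antisymm (le_trans (limsup_le_limsup hle) hlim.limsup_eq.le) zero_le
  -- choose r0 ∈ S with r0 < N - γ
  obtain ⟨r0, hr0S, hr0⟩ : ∃ r0 ∈ S, r0 < (N:ℝ) - γ := by
    by_cases hbdd : BddBelow S
    · refine exists_lt_of_csInf_lt ⟨_, hSne⟩ ?_
      have : sInf S < (N:ℝ) - γ := by unfold upperBoxDim at hγ; linarith
      exact this
    · obtain ⟨y, hyS, hy⟩ := not_bddBelow_iff.mp hbdd ((N:ℝ) - γ)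
      exact ⟨y, hyS, hy⟩
  -- eventual volume bound
  obtain ⟨t0, ht0pos, ht0⟩ : ∃ t0 > 0, ∀ t : ℝ, 0 < t → t < t0 →
      volume (thickening t A) ≤ ENNReal.ofReal (t ^ ((N:ℝ) - r0)) := by
    have hlt : Filter.limsup
        (fun t : ℝ => volume (thickening t A) / ENNReal.ofReal (t ^ ((N:ℝ) - r0)))
        (𝓝[>](0:ℝ)) < 1 := by
      have : upperMinkowskiContent N A r0 = 0 := hr0S
      rw [upperMinkowskiContent] at this
      rw [this]; exact zero_lt_one
    have hev := eventually_lt_of_limsup_lt hlt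
    rw [eventually_iff, mem_nhdsGT_iff_exists_Ioo_subset] at hev
    obtain ⟨u, hu, hsub⟩ := hev
    refine ⟨u, hu, fun t ht htu => ?_⟩
    have h1 : volume (thickening t A) / ENNReal.ofReal (t ^ ((N:ℝ) - r0)) < 1 :=
      hsub ⟨ht, htu⟩
    have h0 : ENNReal.ofReal (t ^ ((N:ℝ) - r0)) ≠ 0 := by
      simp [ENNReal.ofReal_eq_zero, not_le, Real.rpow_pos_of_pos ht]
    rw [ENNReal.div_lt_iff (Or.inl h0) (Or.inl ENNReal.ofReal_ne_top), one_mul] at h1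
    exact h1.le
  -- main case split
  rcases le_or_gt γ 0 with hγ0 | hγ0
  · -- γ ≤ 0 : integrand bounded by δ^(-γ)
    calc ∫⁻ x in thickening δ A, ENNReal.ofReal (infDist x A ^ (-γ))
        ≤ ∫⁻ _x in thickening δ A, ENNReal.ofReal (δ ^ (-γ)) := by
          refine setLIntegral_mono' isOpen_thickening.measurableSet fun x hx => ?_
          refine ENNReal.ofReal_le_ofReal ?_
          exact Real.rpow_le_rpow Metric.infDist_nonneg
            ((mem_thickening_iff_infDist_lt hA).mp hx).le (neg_nonneg.mpr hγ0)
      _ = ENNReal.ofReal (δ ^ (-γ)) * volume (thickening δ A) := by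
          rw [setLIntegral_const]
      _ < ⊤ := ENNReal.mul_lt_top ENNReal.ofReal_lt_top (hfin δ)
  · -- γ > 0
    set T := min δ (t0/2) with hT
    have hTpos : 0 < T := lt_min hδ (by linarith)
    have hTδ : T ≤ δ := min_le_left _ _
    have hTt0 : T < t0 := lt_of_le_of_lt (min_le_right _ _) (by linarith)
    set a := (N:ℝ) - r0 - γ with ha
    have hapos : 0 < a := by linarith
    set q : ℝ := (1/2:ℝ) ^ a with hq
    have hq0 : 0 < q := Real.rpow_pos_of_pos (by norm_num) _
    have hq1 : q < 1 := Real.rpow_lt_one (by norm_num) (by norm_num) hapos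
    set C : ℝ := T ^ a * (1/2:ℝ) ^ (-γ) with hC
    set E : ℕ → Set (EuclideanSpace ℝ (Fin N)) :=
      fun k => thickening (T * (1/2:ℝ)^k) A \ thickening (T * (1/2:ℝ)^(k+1)) A with hE
    -- covering
    have hcover : thickening T A ⊆ closure A ∪ ⋃ k, E k := by
      intro x hx
      have hd : infDist x A < T := (mem_thickening_iff_infDist_lt hA).mp hx
      rcases eq_or_lt_of_le (Metric.infDist_nonneg (x := x) (s := A)) with h0 | h0
      · exact Or.inl ((mem_closure_iff_infDist_zero hA).mpr h0.symm)
      · right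
        have hP : ∃ k : ℕ, T * (1/2:ℝ)^(k+1) ≤ infDist x A := by
          obtain ⟨n, hn⟩ := exists_pow_lt_of_lt_one (div_pos h0 hTpos)
            (by norm_num : (1/2:ℝ) < 1)
          refine ⟨n, ?_⟩
          have h1 : T * (1/2:ℝ)^n < infDist x A := by
            rw [mul_comm, ← lt_div_iff₀ hTpos]; exact hn
          have h2 : (1/2:ℝ)^(n+1) ≤ (1/2:ℝ)^n := by
            apply pow_le_pow_of_le_one (by norm_num) (by norm_num); omega
          nlinarith
        have h1 : T * (1/2:ℝ)^(Nat.find hP + 1) ≤ infDist x A := Nat.find_spec hP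
        have h2 : infDist x A < T * (1/2:ℝ)^(Nat.find hP) := by
          rcases h : Nat.find hP with _ | m
          · simpa using hd
          · have := Nat.find_min hP (by omega : m < Nat.find hP)
            push_neg at this
            simpa using this
        refine mem_iUnion.mpr ⟨Nat.find hP, ?_, ?_⟩
        · exact (mem_thickening_iff_infDist_lt hA).mpr h2
        · intro hmem
          exact absurd ((mem_thickening_iff_infDist_lt hA).mp hmem) (not_lt.mpr h1)
    -- per-annulus bound
    have hEk : ∀ k : ℕ, ∫⁻ x in E k, ENNReal.ofReal (infDist x A ^ (-γ))
        ≤ ENNReal.ofReal C * (ENNReal.ofReal q) ^ k := by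
      intro k
      have hrk : (0:ℝ) < T * (1/2:ℝ)^k := by positivity
      have hrk1 : (0:ℝ) < T * (1/2:ℝ)^(k+1) := by positivity
      have hle1 : T * (1/2:ℝ)^k ≤ T := by
        have : (1/2:ℝ)^k ≤ 1 := pow_le_one₀ (by norm_num) (by norm_num)
        nlinarith
      have hlt0 : T * (1/2:ℝ)^k < t0 := lt_of_le_of_lt hle1 hTt0
      have hmeas : MeasurableSet (E k) :=
        isOpen_thickening.measurableSet.diff isOpen_thickening.measurableSet
      calc ∫⁻ x in E k, ENNReal.ofReal (infDist x A ^ (-γ))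
          ≤ ∫⁻ _x in E k, ENNReal.ofReal ((T * (1/2:ℝ)^(k+1)) ^ (-γ)) := by
            refine setLIntegral_mono' hmeas fun x hx => ?_
            refine ENNReal.ofReal_le_ofReal ?_
            refine Real.rpow_le_rpow_of_nonpos hrk1 ?_ (neg_nonpos.mpr hγ0.le)
            exact not_lt.mp fun h => hx.2 ((mem_thickening_iff_infDist_lt hA).mpr h)
        _ = ENNReal.ofReal ((T * (1/2:ℝ)^(k+1)) ^ (-γ)) * volume (E k) :=
            setLIntegral_const _ _
        _ ≤ ENNReal.ofReal ((T * (1/2:ℝ)^(k+1)) ^ (-γ))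
              * ENNReal.ofReal ((T * (1/2:ℝ)^k) ^ ((N:ℝ) - r0)) := by
            gcongr
            exact le_trans (measure_mono diff_subset) (ht0 _ hrk hlt0)
        _ = ENNReal.ofReal ((T * (1/2:ℝ)^(k+1)) ^ (-γ) * (T * (1/2:ℝ)^k) ^ ((N:ℝ) - r0)) :=
            (ENNReal.ofReal_mul (Real.rpow_nonneg hrk1.le _)).symm
        _ = ENNReal.ofReal (C * q ^ k) := by
            rw [hp_alg T (1/2:ℝ) ((N:ℝ) - r0) γ hTpos (by norm_num) k, hC, hq, ha]
        _ = ENNReal.ofReal C * (ENNReal.ofReal q) ^ k := by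
            rw [ENNReal.ofReal_mul (by positivity), ENNReal.ofReal_pow hq0.le]
    -- integral over closure is 0
    have hclos : ∫⁻ x in closure A, ENNReal.ofReal (infDist x A ^ (-γ)) = 0 := by
      refine le_antisymm ?_ zero_le
      have hb : ∀ x ∈ closure A, ENNReal.ofReal (infDist x A ^ (-γ)) ≤ (0:ENNReal) := by
        intro x hx
        rw [infDist_zero_of_mem_closure hx, Real.zero_rpow (neg_ne_zero.mpr hγ0.ne')]
        simp
      refine le_trans (setLIntegral_mono' (g := fun _ => (0:ENNReal))
        isClosed_closure.measurableSet hb) ?_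
      simp
    -- assemble
    have hsplit : ∫⁻ x in thickening δ A, ENNReal.ofReal (infDist x A ^ (-γ))
        ≤ (∫⁻ x in thickening δ A \ thickening T A, ENNReal.ofReal (infDist x A ^ (-γ)))
          + ∫⁻ x in thickening T A, ENNReal.ofReal (infDist x A ^ (-γ)) := by
      have hsub : thickening δ A ⊆ (thickening δ A \ thickening T A) ∪ thickening T A := by
        intro x hx
        by_cases h : x ∈ thickening T A
        · exact Or.inr h
        · exact Or.inl ⟨hx, h⟩
      refine le_trans ?_ (lintegral_union_le _ _ _)
      exact lintegral_mono' (Measure.restrict_mono hsub le_rfl) le_rfl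
    have hpart1 : ∫⁻ x in thickening δ A \ thickening T A,
        ENNReal.ofReal (infDist x A ^ (-γ)) < ⊤ := by
      have hmeas : MeasurableSet (thickening δ A \ thickening T A) :=
        isOpen_thickening.measurableSet.diff isOpen_thickening.measurableSet
      calc ∫⁻ x in thickening δ A \ thickening T A, ENNReal.ofReal (infDist x A ^ (-γ))
          ≤ ∫⁻ _x in thickening δ A \ thickening T A, ENNReal.ofReal (T ^ (-γ)) := by
            refine setLIntegral_mono' hmeas fun x hx => ?_
            refine ENNReal.ofReal_le_ofReal ?_
            refine Real.rpow_le_rpow_of_nonpos hTpos ?_ (neg_nonpos.mpr hγ0.le)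
            exact not_lt.mp fun h => hx.2 ((mem_thickening_iff_infDist_lt hA).mpr h)
        _ = ENNReal.ofReal (T ^ (-γ)) * volume (thickening δ A \ thickening T A) :=
            setLIntegral_const _ _
        _ ≤ ENNReal.ofReal (T ^ (-γ)) * volume (thickening δ A) := by
            gcongr
            exact diff_subset
        _ < ⊤ := ENNReal.mul_lt_top ENNReal.ofReal_lt_top (hfin δ)
    have hpart2 : ∫⁻ x in thickening T A, ENNReal.ofReal (infDist x A ^ (-γ)) < ⊤ := by
      calc ∫⁻ x in thickening T A, ENNReal.ofReal (infDist x A ^ (-γ))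
          ≤ ∫⁻ x in closure A ∪ ⋃ k, E k, ENNReal.ofReal (infDist x A ^ (-γ)) :=
            lintegral_mono' (Measure.restrict_mono hcover le_rfl) le_rfl
        _ ≤ (∫⁻ x in closure A, ENNReal.ofReal (infDist x A ^ (-γ)))
              + ∫⁻ x in ⋃ k, E k, ENNReal.ofReal (infDist x A ^ (-γ)) :=
            lintegral_union_le _ _ _
        _ ≤ 0 + ∑' k, ∫⁻ x in E k, ENNReal.ofReal (infDist x A ^ (-γ)) := by
            gcongr
            · exact hclos.le
            · exact lintegral_iUnion_le _ _
        _ ≤ 0 + ∑' k : ℕ, ENNReal.ofReal C * (ENNReal.ofReal q) ^ k :=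
            add_le_add le_rfl (ENNReal.tsum_le_tsum hEk)
        _ = ENNReal.ofReal C * (1 - ENNReal.ofReal q)⁻¹ := by
            rw [zero_add, ENNReal.tsum_mul_left, ENNReal.tsum_geometric]
        _ < ⊤ := by
            refine ENNReal.mul_lt_top ENNReal.ofReal_lt_top ?_
            rw [ENNReal.inv_lt_top]
            exact tsub_pos_of_lt (ENNReal.ofReal_lt_one.mpr hq1)
    exact lt_of_le_of_lt hsplit (ENNReal.add_lt_top.mpr ⟨hpart1, hpart2⟩)
end

section
/- Let A be a nonempty bounded subset of ℝ^N, δ > 0, and s ∈ ℂ with Re(s) > dim_B̄(A). Then the distance zeta function ζ_A(s) := ∫_{A_δ} d(x,A)^{s-N} dx converges absolutely (i.e., ∫_{A_δ} d(x,A)^{Re(s)-N} dx < ∞). -/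
open MeasureTheory Metric Filter Set Topology

/-- For a bounded set, the Minkowski content vanishes for `r = N + 1`. -/
lemma upperMinkowskiContent_succ_eq_zero (N : ℕ) (A : Set (EuclideanSpace ℝ (Fin N)))
    (hAb : Bornology.IsBounded A) : upperMinkowskiContent N A ((N : ℝ) + 1) = 0 := by
  have hV : volume (Metric.thickening 1 A) ≠ ⊤ :=
    (Bornology.IsBounded.measure_lt_top (hAb.thickening)).ne
  apply Filter.Tendsto.limsup_eq
  apply tendsto_of_tendsto_of_tendsto_of_le_of_le'
    (g := fun _ : ℝ => (0 : ENNReal))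
    (h := fun t : ℝ => volume (Metric.thickening 1 A) * ENNReal.ofReal t)
    tendsto_const_nhds
  · -- upper function tends to 0
    have h1 : Filter.Tendsto (fun t : ℝ => t) (nhdsWithin 0 (Set.Ioi 0)) (nhds 0) :=
      tendsto_id.mono_left nhdsWithin_le_nhds
    have h2 : Filter.Tendsto (fun t : ℝ => ENNReal.ofReal t) (nhdsWithin 0 (Set.Ioi 0))
        (nhds 0) := by
      simpa using ENNReal.tendsto_ofReal h1
    have h3 := ENNReal.Tendsto.const_mul h2 (Or.inr hV)
    simpa using h3
  · exact Filter.Eventually.of_forall fun t => zero_le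
  · filter_upwards [Ioo_mem_nhdsGT_of_mem (by simp : (0:ℝ) ∈ Set.Ico (0:ℝ) 1)] with t ht
    have hexp : (N : ℝ) - ((N : ℝ) + 1) = -1 := by ring
    rw [hexp, Real.rpow_neg_one, ENNReal.ofReal_inv_of_pos ht.1, div_eq_mul_inv, inv_inv]
    exact mul_le_mul_left (measure_mono (Metric.thickening_mono ht.2.le A)) _

/-- Extract a good exponent `r` below `σ`. -/
lemma exists_exponent (N : ℕ) (A : Set (EuclideanSpace ℝ (Fin N)))
    (hAb : Bornology.IsBounded A) {σ : ℝ} (hσ : upperBoxDim N A < σ) :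
    ∃ r : ℝ, r < σ ∧ upperMinkowskiContent N A r = 0 := by
  set S : Set ℝ := {r : ℝ | upperMinkowskiContent N A r = 0} with hS
  have hne : S.Nonempty := ⟨(N : ℝ) + 1, upperMinkowskiContent_succ_eq_zero N A hAb⟩
  by_cases hbd : BddBelow S
  · have := (csInf_lt_iff hbd hne).mp hσ
    obtain ⟨r, hrS, hr⟩ := this
    exact ⟨r, hr, hrS⟩
  · obtain ⟨r, hrS, hr⟩ := not_bddBelow_iff.mp hbd σ
    exact ⟨r, hr, hrS⟩

/-- For `Re s > dim_B̄ A`, the distance zeta function integral converges absolutely: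
`∫_{A_δ} d(x,A)^{Re s - N} dx < ∞`. -/
theorem stmt_1 (N : ℕ) (A : Set (EuclideanSpace ℝ (Fin N))) (hA : A.Nonempty)
    (hAb : Bornology.IsBounded A) (δ : ℝ) (hδ : 0 < δ) (s : ℂ)
    (hs : upperBoxDim N A < s.re) :
    ∫⁻ x in Metric.thickening δ A, ENNReal.ofReal (Metric.infDist x A ^ (s.re - N)) < ⊤ := by
  set σ : ℝ := s.re with hσdef
  have hVδ : volume (Metric.thickening δ A) < ⊤ :=
    Bornology.IsBounded.measure_lt_top (hAb.thickening)
  by_cases hσN : (N : ℝ) ≤ σ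
  · -- easy case: bounded integrand
    have hbound : ∀ x ∈ Metric.thickening δ A,
        ENNReal.ofReal (Metric.infDist x A ^ (σ - (N:ℝ)))
          ≤ ENNReal.ofReal (δ ^ (σ - (N:ℝ))) := by
      intro x hx
      apply ENNReal.ofReal_le_ofReal
      exact Real.rpow_le_rpow Metric.infDist_nonneg
        ((Metric.mem_thickening_iff_infDist_lt hA).mp hx).le (by linarith)
    calc ∫⁻ x in Metric.thickening δ A, ENNReal.ofReal (Metric.infDist x A ^ (σ - (N:ℝ)))
        ≤ ∫⁻ _ in Metric.thickening δ A, ENNReal.ofReal (δ ^ (σ - (N:ℝ))) :=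
          setLIntegral_mono measurable_const hbound
      _ = ENNReal.ofReal (δ ^ (σ - (N:ℝ))) * volume (Metric.thickening δ A) :=
          setLIntegral_const _ _
      _ < ⊤ := ENNReal.mul_lt_top ENNReal.ofReal_lt_top hVδ
  · -- hard case: σ < N
    push_neg at hσN
    obtain ⟨r, hrσ, hr0⟩ := exists_exponent N A hAb hs
    -- eventual volume bound
    have hev : ∀ᶠ t in nhdsWithin (0:ℝ) (Set.Ioi 0),
        volume (Metric.thickening t A) ≤ ENNReal.ofReal (t ^ ((N:ℝ) - r)) := by
      have h1 : ∀ᶠ t in nhdsWithin (0:ℝ) (Set.Ioi 0),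
          volume (Metric.thickening t A) / ENNReal.ofReal (t ^ ((N:ℝ) - r)) < 1 := by
        apply Filter.eventually_lt_of_limsup_lt
        · rw [show Filter.limsup _ _ = upperMinkowskiContent N A r from rfl, hr0]
          exact zero_lt_one
        · isBoundedDefault
      filter_upwards [h1, self_mem_nhdsWithin] with t ht ht'
      have htpos : (0:ℝ) < t := ht'
      have hb0 : ENNReal.ofReal (t ^ ((N:ℝ) - r)) ≠ 0 := by
        simp [ENNReal.ofReal_eq_zero, not_le, Real.rpow_pos_of_pos htpos]
      have hbt : ENNReal.ofReal (t ^ ((N:ℝ) - r)) ≠ ⊤ := ENNReal.ofReal_ne_top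
      have := (ENNReal.div_lt_iff (Or.inl hb0) (Or.inl hbt)).mp ht
      simpa using this.le
    obtain ⟨t₀, ht₀, hsub⟩ := mem_nhdsGT_iff_exists_Ioo_subset.mp hev
    have ht₀pos : (0:ℝ) < t₀ := ht₀
    set T : ℝ := t₀ / 2 with hTdef
    have hTpos : 0 < T := by positivity
    have hTlt : T < t₀ := by simp [hTdef]; linarith
    set β : ℝ := σ - (N:ℝ) with hβdef
    have hβneg : β < 0 := by simp [hβdef]; linarith
    set lam : ℝ := T ^ β with hlamdef
    have hlampos : 0 < lam := Real.rpow_pos_of_pos hTpos β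
    set q : ℝ := β⁻¹ * ((N:ℝ) - r) with hqdef
    have hq : q < -1 := by
      rw [hqdef, inv_mul_eq_div, div_lt_iff_of_neg hβneg]
      simp [hβdef]; linarith
    -- layer cake
    set μ : Measure (EuclideanSpace ℝ (Fin N)) := volume.restrict (Metric.thickening δ A)
      with hμdef
    have f_nn : 0 ≤ᵐ[μ] fun x => Metric.infDist x A ^ β :=
      Filter.Eventually.of_forall fun x => Real.rpow_nonneg Metric.infDist_nonneg β
    have f_m : AEMeasurable (fun x => Metric.infDist x A ^ β) μ :=
      ((continuous_infDist_pt A).measurable.pow measurable_const).aemeasurable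
    have hμS : ∀ S : Set (EuclideanSpace ℝ (Fin N)), μ S ≤ volume S := by
      intro S
      exact Measure.restrict_le_self S
    rw [MeasureTheory.lintegral_eq_lintegral_meas_lt μ f_nn f_m]
    have hsplit : Set.Ioi (0:ℝ) = Set.Ioc 0 lam ∪ Set.Ioi lam :=
      (Set.Ioc_union_Ioi_eq_Ioi hlampos.le).symm
    rw [hsplit, lintegral_union measurableSet_Ioi Set.Ioc_disjoint_Ioi_same]
    apply ENNReal.add_lt_top.mpr
    constructor
    · -- finite part
      calc ∫⁻ t in Set.Ioc 0 lam, μ {a | t < Metric.infDist a A ^ β}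
          ≤ ∫⁻ _ in Set.Ioc 0 lam, volume (Metric.thickening δ A) := by
            apply setLIntegral_mono measurable_const
            intro t _
            calc μ {a | t < Metric.infDist a A ^ β} ≤ μ Set.univ := measure_mono (Set.subset_univ _)
              _ = volume (Metric.thickening δ A) := by rw [hμdef, Measure.restrict_apply_univ]
        _ = volume (Metric.thickening δ A) * volume (Set.Ioc 0 lam) := setLIntegral_const _ _
        _ < ⊤ := ENNReal.mul_lt_top hVδ (by simp [Real.volume_Ioc])
    · -- tail part
      have hmono : ∀ t ∈ Set.Ioi lam,
          μ {a | t < Metric.infDist a A ^ β} ≤ ENNReal.ofReal (t ^ q) := by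
        intro t ht
        have htpos : 0 < t := hlampos.trans ht
        have huT : t ^ β⁻¹ < T := by
          rw [Real.rpow_inv_lt_iff_of_neg htpos hTpos hβneg]
          exact ht
        have hupos : 0 < t ^ β⁻¹ := Real.rpow_pos_of_pos htpos _
        have hss : {a | t < Metric.infDist a A ^ β} ⊆ Metric.thickening (t ^ β⁻¹) A := by
          intro x hx
          have hx' : t < Metric.infDist x A ^ β := hx
          have hd0 : 0 < Metric.infDist x A := by
            rcases lt_or_eq_of_le (Metric.infDist_nonneg (x := x) (s := A)) with h | h
            · exact h
            · exfalso
              rw [← h, Real.zero_rpow hβneg.ne] at hx'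
              exact absurd hx' (not_lt.mpr htpos.le)
          rw [Metric.mem_thickening_iff_infDist_lt hA]
          exact (Real.lt_rpow_inv_iff_of_neg hd0 htpos hβneg).mpr hx'
        calc μ {a | t < Metric.infDist a A ^ β}
            ≤ volume {a | t < Metric.infDist a A ^ β} := hμS _
          _ ≤ volume (Metric.thickening (t ^ β⁻¹) A) := measure_mono hss
          _ ≤ ENNReal.ofReal ((t ^ β⁻¹) ^ ((N:ℝ) - r)) :=
              hsub ⟨hupos, huT.trans hTlt⟩
          _ = ENNReal.ofReal (t ^ q) := by
              rw [hqdef, Real.rpow_mul htpos.le]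
      calc ∫⁻ t in Set.Ioi lam, μ {a | t < Metric.infDist a A ^ β}
          ≤ ∫⁻ t in Set.Ioi lam, ENNReal.ofReal (t ^ q) :=
            setLIntegral_mono ((measurable_id.pow measurable_const).ennreal_ofReal) hmono
        _ < ⊤ := (integrableOn_Ioi_rpow_of_lt hq hlampos).lintegral_lt_top
end

section
/- Let A = {(0,0)} ⊆ ℝ² and Ω' = {(x,y) ∈ ℝ² : 0 < y < e^{-1/x}, 0 < x < 1}. Then dim_B̄(A, Ω') = −∞, i.e., for every r ∈ ℝ, limsup_{t→0+} |A_t ∩ Ω'| / t^{2-r} = 0. -/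
open MeasureTheory Metric Filter Set Topology

/-- For `A = {(0,0)}` and `Ω' = {(x,y) : 0 < y < e^{-1/x}, 0 < x < 1}`, the relative
upper box dimension is `-∞`: for every `r ∈ ℝ`, `limsup_{t→0+} |A_t ∩ Ω'|/t^{2-r} = 0`. -/
theorem stmt_5 (A : Set (EuclideanSpace ℝ (Fin 2))) (hA : A = {0})
    (Ω' : Set (EuclideanSpace ℝ (Fin 2)))
    (hΩ' : Ω' = {p : EuclideanSpace ℝ (Fin 2) |
      0 < p 0 ∧ p 0 < 1 ∧ 0 < p 1 ∧ p 1 < Real.exp (-1 / p 0)}) :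
    ∀ r : ℝ,
      Filter.limsup
        (fun t : ℝ =>
          volume (Metric.thickening t A ∩ Ω') / ENNReal.ofReal (t ^ ((2 : ℝ) - r)))
        (nhdsWithin 0 (Set.Ioi 0)) = 0 := by
  subst hA hΩ'
  intro r
  -- the volume bound
  have keyvol : ∀ t : ℝ, 0 < t →
      volume (Metric.thickening t ({0} : Set (EuclideanSpace ℝ (Fin 2))) ∩
        {p : EuclideanSpace ℝ (Fin 2) |
          0 < p 0 ∧ p 0 < 1 ∧ 0 < p 1 ∧ p 1 < Real.exp (-1 / p 0)})
      ≤ ENNReal.ofReal t * ENNReal.ofReal (Real.exp (-1 / t)) := by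
    intro t ht
    have hsub : Metric.thickening t ({0} : Set (EuclideanSpace ℝ (Fin 2))) ∩
        {p : EuclideanSpace ℝ (Fin 2) |
          0 < p 0 ∧ p 0 < 1 ∧ 0 < p 1 ∧ p 1 < Real.exp (-1 / p 0)} ⊆
        (MeasurableEquiv.toLp 2 (Fin 2 → ℝ)).symm ⁻¹'
          (Set.univ.pi fun i => if i = 0 then Set.Ioo 0 t else Set.Ioo 0 (Real.exp (-1 / t))) := by
      rintro p ⟨hp1, hp2⟩
      rw [Metric.thickening_singleton, Metric.mem_ball, dist_zero_right] at hp1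
      obtain ⟨hx0, _, hy0, hy1⟩ := hp2
      have hcoord : ∀ i : Fin 2, |p i| ≤ ‖p‖ := by
        intro i
        rw [EuclideanSpace.norm_eq]
        have h1 : |p i| = Real.sqrt (‖p i‖ ^ 2) := by
          rw [Real.norm_eq_abs, Real.sqrt_sq_eq_abs, abs_abs]
        rw [h1]
        apply Real.sqrt_le_sqrt
        exact Finset.single_le_sum (f := fun j => ‖p j‖ ^ 2)
          (fun j _ => sq_nonneg _) (Finset.mem_univ i)
      have hxt : p 0 < t := lt_of_le_of_lt (le_abs_self _) (lt_of_le_of_lt (hcoord 0) hp1)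
      have hylt : p 1 < Real.exp (-1 / t) := by
        refine hy1.trans_le (Real.exp_le_exp.2 ?_)
        rw [neg_div, neg_div, neg_le_neg_iff]
        exact one_div_le_one_div_of_le hx0 hxt.le
      intro i _
      fin_cases i <;> simp_all [MeasurableEquiv.coe_toLp_symm]
    calc volume _ ≤ volume ((MeasurableEquiv.toLp 2 (Fin 2 → ℝ)).symm ⁻¹'
          (Set.univ.pi fun i => if i = 0 then Set.Ioo 0 t else Set.Ioo 0 (Real.exp (-1 / t)))) :=
            measure_mono hsub
      _ = volume (Set.univ.pi fun i : Fin 2 =>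
            if i = 0 then Set.Ioo 0 t else Set.Ioo 0 (Real.exp (-1 / t))) := by
          refine (EuclideanSpace.volume_preserving_symm_measurableEquiv_toLp (Fin 2)).measure_preimage ?_
          exact (MeasurableSet.univ_pi fun i => by
            split <;> exact measurableSet_Ioo).nullMeasurableSet
      _ = ENNReal.ofReal t * ENNReal.ofReal (Real.exp (-1 / t)) := by
          rw [volume_pi_pi]
          rw [Fin.prod_univ_two]
          simp [Real.volume_Ioo, Real.exp_pos]
    -- done
  -- the scalar bound function tends to zero
  have htend : Filter.Tendsto (fun t : ℝ => t ^ (r - 1) * Real.exp (-1 / t))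
      (nhdsWithin 0 (Set.Ioi 0)) (nhds 0) := by
    have h1 : Filter.Tendsto (fun u : ℝ => u ^ (1 - r) * Real.exp (-1 * u)) atTop (nhds 0) :=
      tendsto_rpow_mul_exp_neg_mul_atTop_nhds_zero (1 - r) 1 one_pos
    have h2 : Filter.Tendsto (fun t : ℝ => t⁻¹) (nhdsWithin 0 (Set.Ioi 0)) atTop :=
      tendsto_inv_nhdsGT_zero
    have := h1.comp h2
    refine this.congr' ?_
    filter_upwards [self_mem_nhdsWithin] with t (ht : 0 < t)
    simp only [Function.comp]
    rw [Real.inv_rpow ht.le, ← Real.rpow_neg ht.le, neg_sub, neg_one_mul, ← one_div t,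
      ← neg_div]
  -- squeeze
  have hf : Filter.Tendsto
      (fun t : ℝ =>
        volume (Metric.thickening t ({0} : Set (EuclideanSpace ℝ (Fin 2))) ∩
          {p : EuclideanSpace ℝ (Fin 2) |
            0 < p 0 ∧ p 0 < 1 ∧ 0 < p 1 ∧ p 1 < Real.exp (-1 / p 0)}) /
          ENNReal.ofReal (t ^ ((2 : ℝ) - r)))
      (nhdsWithin 0 (Set.Ioi 0)) (nhds 0) := by
    have hb : Filter.Tendsto (fun t : ℝ => ENNReal.ofReal (t ^ (r - 1) * Real.exp (-1 / t)))
        (nhdsWithin 0 (Set.Ioi 0)) (nhds 0) := by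
      simpa using ENNReal.tendsto_ofReal htend
    refine tendsto_of_tendsto_of_tendsto_of_le_of_le' tendsto_const_nhds hb ?_ ?_
    · filter_upwards with t using zero_le
    · filter_upwards [self_mem_nhdsWithin] with t (ht : 0 < t)
      have h1 := ENNReal.div_le_div_right (keyvol t ht) (ENNReal.ofReal (t ^ ((2 : ℝ) - r)))
      refine h1.trans (le_of_eq ?_)
      rw [← ENNReal.ofReal_mul ht.le,
        ← ENNReal.ofReal_div_of_pos (Real.rpow_pos_of_pos ht _)]
      congr 1
      have hdiv : t ^ (r - 1) = t / t ^ ((2 : ℝ) - r) := by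
        have h2 := Real.rpow_sub ht 1 (2 - r)
        rw [Real.rpow_one] at h2
        rw [show r - 1 = 1 - (2 - r) by ring, h2]
      rw [hdiv]; ring
  exact hf.limsup_eq
end

section
/- Let G : ℝ → (0,∞) be a nonconstant continuous periodic function with period T > 0, and let A be a bounded subset of ℝ^N such that |A_t| = t^{N-D}(G(log(1/t)) + O(t^α)) as t → 0⁺ for some D ≥ 0 and α > 0. Then dim_B(A) exists and equals D, and the lower and upper Minkowski contents are M_*^D(A) = min G and M^{*D}(A) = max G. In particular, A is Minkowski nondegenerate, and if G is nonconstant, A is not Minkowski measurable. -/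
open MeasureTheory Metric Filter Set Topology

/-- Lower Minkowski content of a bounded set `A ⊆ ℝ^N`. -/
noncomputable def lowerMinkowskiContent (N : ℕ) (A : Set (EuclideanSpace ℝ (Fin N)))
    (r : ℝ) : ENNReal :=
  Filter.liminf
    (fun t : ℝ => volume (Metric.thickening t A) / ENNReal.ofReal (t ^ ((N : ℝ) - r)))
    (nhdsWithin 0 (Set.Ioi 0))

noncomputable def lowerBoxDim (N : ℕ) (A : Set (EuclideanSpace ℝ (Fin N))) : ℝ :=
  sInf {r : ℝ | lowerMinkowskiContent N A r = 0}

/-- Minkowski nonmeasurable case: if `|A_t| = t^{N-D}(G(log(1/t)) + O(t^α))` with `G`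
nonconstant, continuous, positive and `T`-periodic, then `dim_B A = D`,
`M_*^D(A) = min G`, `M^{*D}(A) = max G`; in particular `A` is Minkowski nondegenerate
and not Minkowski measurable. -/
theorem stmt_8 (N : ℕ) (A : Set (EuclideanSpace ℝ (Fin N))) (hA : A.Nonempty)
    (hAb : Bornology.IsBounded A) (G : ℝ → ℝ) (T : ℝ) (hT : 0 < T)
    (hGcont : Continuous G) (hGper : Function.Periodic G T)
    (hGpos : ∀ x, 0 < G x) (hGnonconst : ∃ x y, G x ≠ G y)
    (D α : ℝ) (hD : 0 ≤ D) (hα : 0 < α)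
    (hO : ∃ C ε : ℝ, 0 < C ∧ 0 < ε ∧ ∀ t : ℝ, 0 < t → t < ε →
      |(volume (Metric.thickening t A)).toReal - G (Real.log (1 / t)) * t ^ ((N : ℝ) - D)|
        ≤ C * t ^ ((N : ℝ) - D + α)) :
    upperBoxDim N A = D ∧ lowerBoxDim N A = D ∧
      lowerMinkowskiContent N A D = ENNReal.ofReal (sInf (Set.range G)) ∧
      upperMinkowskiContent N A D = ENNReal.ofReal (sSup (Set.range G)) ∧
      0 < lowerMinkowskiContent N A D ∧ upperMinkowskiContent N A D < ⊤ ∧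
      lowerMinkowskiContent N A D ≠ upperMinkowskiContent N A D := by
  classical
  obtain ⟨C, ε, hC, hε, hbound⟩ := hO
  set l : Filter ℝ := nhdsWithin 0 (Set.Ioi 0) with hl
  haveI hlne : l.NeBot := by rw [hl]; exact nhdsGT_neBot 0
  -- range of G
  have hrange : Set.range G = G '' Set.Icc 0 T := by
    apply Set.Subset.antisymm
    · rintro _ ⟨x, rfl⟩
      obtain ⟨y, hy, hxy⟩ := hGper.exists_mem_Ico₀ hT x
      exact ⟨y, ⟨hy.1, hy.2.le⟩, hxy.symm⟩
    · rintro _ ⟨x, _, rfl⟩; exact ⟨x, rfl⟩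
  have hK : IsCompact (G '' Set.Icc 0 T) := isCompact_Icc.image hGcont
  have hne : (G '' Set.Icc 0 T).Nonempty := ⟨G 0, ⟨0, ⟨le_refl _, hT.le⟩, rfl⟩⟩
  set m : ℝ := sInf (Set.range G) with hm
  set M : ℝ := sSup (Set.range G) with hM
  have hbddB : BddBelow (Set.range G) := by rw [hrange]; exact hK.bddBelow
  have hbddA : BddAbove (Set.range G) := by rw [hrange]; exact hK.bddAbove
  have hmmem : m ∈ Set.range G := by rw [hm, hrange]; exact hK.sInf_mem hne
  have hMmem : M ∈ Set.range G := by rw [hM, hrange]; exact hK.sSup_mem hne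
  obtain ⟨xm, hxm⟩ := hmmem
  obtain ⟨xM, hxM⟩ := hMmem
  have hmle : ∀ x, m ≤ G x := fun x => csInf_le hbddB ⟨x, rfl⟩
  have hleM : ∀ x, G x ≤ M := fun x => le_csSup hbddA ⟨x, rfl⟩
  have hmpos : 0 < m := hxm ▸ hGpos xm
  have hmM : m < M := by
    obtain ⟨x, y, hxy⟩ := hGnonconst
    rcases lt_or_gt_of_ne hxy with h | h
    · exact lt_of_le_of_lt (hmle x) (lt_of_lt_of_le h (hleM y))
    · exact lt_of_le_of_lt (hmle y) (lt_of_lt_of_le h (hleM x))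
  -- finiteness of volume of thickening
  have hVfin : ∀ t : ℝ, volume (Metric.thickening t A) ≠ ⊤ :=
    fun t => (hAb.thickening.measure_lt_top).ne
  set g : ℝ → ℝ := fun t => (volume (Metric.thickening t A)).toReal / t ^ ((N : ℝ) - D)
    with hgdef
  have hgnonneg : ∀ t : ℝ, 0 < t → 0 ≤ g t := fun t ht =>
    div_nonneg ENNReal.toReal_nonneg (Real.rpow_pos_of_pos ht _).le
  -- key identity
  have hF : ∀ (r : ℝ) (t : ℝ), 0 < t →
      volume (Metric.thickening t A) / ENNReal.ofReal (t ^ ((N : ℝ) - r))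
        = ENNReal.ofReal (g t * t ^ (r - D)) := by
    intro r t ht
    have h1 : (0:ℝ) < t ^ ((N : ℝ) - r) := Real.rpow_pos_of_pos ht _
    have h2 : (0:ℝ) < t ^ ((N : ℝ) - D) := Real.rpow_pos_of_pos ht _
    rw [← ENNReal.ofReal_toReal (hVfin t), ← ENNReal.ofReal_div_of_pos h1]
    congr 1
    have e : t ^ (r - D) = t ^ ((N : ℝ) - D) / t ^ ((N : ℝ) - r) := by
      rw [← Real.rpow_sub ht]; congr 1; ring
    rw [hgdef]
    simp only
    rw [e]
    field_simp
  -- error estimate on g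
  have hg : ∀ t : ℝ, 0 < t → t < ε → |g t - G (Real.log (1 / t))| ≤ C * t ^ α := by
    intro t ht htε
    have hp : (0:ℝ) < t ^ ((N : ℝ) - D) := Real.rpow_pos_of_pos ht _
    have h1 := hbound t ht htε
    have e : g t - G (Real.log (1 / t))
        = ((volume (Metric.thickening t A)).toReal
            - G (Real.log (1 / t)) * t ^ ((N : ℝ) - D)) / t ^ ((N : ℝ) - D) := by
      rw [hgdef]; field_simp
    rw [e, abs_div, abs_of_pos hp, div_le_iff₀ hp]
    calc |(volume (Metric.thickening t A)).toReal
            - G (Real.log (1 / t)) * t ^ ((N : ℝ) - D)|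
        ≤ C * t ^ ((N : ℝ) - D + α) := h1
      _ = C * t ^ α * t ^ ((N : ℝ) - D) := by
          rw [show (N : ℝ) - D + α = α + ((N : ℝ) - D) by ring, Real.rpow_add ht]; ring
  -- C * t^α tends to 0
  have hCα : Filter.Tendsto (fun t : ℝ => C * t ^ α) l (nhds 0) := by
    have h0 : Filter.Tendsto (fun t : ℝ => t ^ α) (nhds 0) (nhds (0:ℝ)) := by
      have := (Real.continuousAt_rpow_const 0 α (Or.inr hα.le)).tendsto
      simpa [Real.zero_rpow hα.ne'] using this
    have h0' : Filter.Tendsto (fun t : ℝ => t ^ α) l (nhds (0:ℝ)) := by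
      rw [hl]; exact h0.mono_left nhdsWithin_le_nhds
    have := h0'.const_mul C
    simpa using this
  -- main eventual sandwich for g
  have hsand : ∀ δ : ℝ, 0 < δ → ∀ᶠ t in l, 0 < t ∧
      G (Real.log (1 / t)) - δ ≤ g t ∧ g t ≤ G (Real.log (1 / t)) + δ := by
    intro δ hδ
    have h1 : Set.Ioo (0:ℝ) ε ∈ l := by
      rw [hl]; exact Ioo_mem_nhdsGT_of_mem ⟨le_refl _, hε⟩
    filter_upwards [h1, hCα.eventually (gt_mem_nhds hδ)] with t ht hCt
    refine ⟨ht.1, ?_, ?_⟩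
    · have := hg t ht.1 ht.2
      linarith [abs_le.1 this |>.1, hCt.le]
    · have := hg t ht.1 ht.2
      linarith [abs_le.1 this |>.2, hCt.le]
  have hsand' : ∀ δ : ℝ, 0 < δ → ∀ᶠ t in l, 0 < t ∧ m - δ ≤ g t ∧ g t ≤ M + δ := by
    intro δ hδ
    filter_upwards [hsand δ hδ] with t ht
    exact ⟨ht.1, le_trans (by linarith [hmle (Real.log (1/t))]) ht.2.1,
      le_trans ht.2.2 (by linarith [hleM (Real.log (1/t))])⟩
  -- the F functions
  set F : ℝ → ℝ → ENNReal := fun r t =>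
    volume (Metric.thickening t A) / ENNReal.ofReal (t ^ ((N : ℝ) - r)) with hFdef
  have hFD : ∀ t : ℝ, 0 < t → F D t = ENNReal.ofReal (g t) := by
    intro t ht
    rw [hFdef]; simp only
    rw [hF D t ht, sub_self, Real.rpow_zero, mul_one]
  -- sequences realizing max and min
  have hseq : ∀ x₀ : ℝ, ∃ u : ℕ → ℝ, Filter.Tendsto u Filter.atTop l ∧
      ∀ n, 0 < u n ∧ G (Real.log (1 / u n)) = G x₀ := by
    intro x₀
    refine ⟨fun n => Real.exp (-(x₀ + n * T)), ?_, ?_⟩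
    · rw [hl]
      apply tendsto_nhdsWithin_of_tendsto_nhds_of_eventually_within
      · have h1 : Filter.Tendsto (fun n : ℕ => ((n : ℝ) * T)) Filter.atTop Filter.atTop :=
          tendsto_natCast_atTop_atTop.atTop_mul_const hT
        have h2 : Filter.Tendsto (fun n : ℕ => x₀ + (n : ℝ) * T) Filter.atTop Filter.atTop :=
          tendsto_atTop_add_const_left _ x₀ h1
        have h3 : Filter.Tendsto (fun n : ℕ => -(x₀ + (n : ℝ) * T)) Filter.atTop Filter.atBot :=
          tendsto_neg_atBot_iff.mpr h2
        exact Real.tendsto_exp_atBot.comp h3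
      · exact Filter.Eventually.of_forall fun n => Real.exp_pos _
    · intro n
      refine ⟨Real.exp_pos _, ?_⟩
      have e1 : (1:ℝ) / Real.exp (-(x₀ + n * T)) = Real.exp (x₀ + n * T) := by
        rw [Real.exp_neg, one_div, inv_inv]
      rw [e1, Real.log_exp]
      exact (hGper.nat_mul n) x₀
  -- limsup F D = ofReal M
  have hlimsup : Filter.limsup (F D) l = ENNReal.ofReal M := by
    apply le_antisymm
    · apply ENNReal.le_of_forall_pos_le_add
      intro δ hδ _
      have hδ' : (0:ℝ) < δ := hδ
      have hub : ∀ᶠ t in l, F D t ≤ ENNReal.ofReal (M + δ) := by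
        filter_upwards [hsand' δ hδ'] with t ht
        rw [hFD t ht.1]
        exact ENNReal.ofReal_le_ofReal ht.2.2
      calc Filter.limsup (F D) l ≤ ENNReal.ofReal (M + δ) := limsup_le_of_le (by isBoundedDefault) hub
        _ = ENNReal.ofReal M + ENNReal.ofReal δ :=
            ENNReal.ofReal_add (hmpos.le.trans ((hmle 0).trans (hleM 0))) hδ'.le
        _ = ENNReal.ofReal M + δ := by rw [ENNReal.ofReal_coe_nnreal]
    · apply ENNReal.le_of_forall_pos_le_add
      intro δ hδ _
      have hδ' : (0:ℝ) < δ := hδ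
      obtain ⟨u, hu, hun⟩ := hseq xM
      have hfreq : ∃ᶠ t in l, ENNReal.ofReal (M - δ) ≤ F D t := by
        apply hu.frequently
        apply Filter.Eventually.frequently
        filter_upwards [hu.eventually (hsand δ hδ')] with n hn
        rw [hFD (u n) (hun n).1]
        apply ENNReal.ofReal_le_ofReal
        have := hn.2.1
        rw [(hun n).2, hxM] at this
        linarith
      have h1 : ENNReal.ofReal (M - δ) ≤ Filter.limsup (F D) l :=
        le_limsup_of_frequently_le' hfreq
      calc ENNReal.ofReal M ≤ ENNReal.ofReal (M - δ) + ENNReal.ofReal δ := by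
            refine le_trans (ENNReal.ofReal_le_ofReal (by linarith : M ≤ (M - δ) + δ)) ?_
            exact ENNReal.ofReal_add_le
        _ ≤ Filter.limsup (F D) l + ENNReal.ofReal δ := add_le_add_left h1 _
        _ = Filter.limsup (F D) l + δ := by rw [ENNReal.ofReal_coe_nnreal]
  -- liminf F D = ofReal m
  have hliminf : Filter.liminf (F D) l = ENNReal.ofReal m := by
    apply le_antisymm
    · apply ENNReal.le_of_forall_pos_le_add
      intro δ hδ _
      have hδ' : (0:ℝ) < δ := hδ
      obtain ⟨u, hu, hun⟩ := hseq xm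
      have hfreq : ∃ᶠ t in l, F D t ≤ ENNReal.ofReal (m + δ) := by
        apply hu.frequently
        apply Filter.Eventually.frequently
        filter_upwards [hu.eventually (hsand δ hδ')] with n hn
        rw [hFD (u n) (hun n).1]
        apply ENNReal.ofReal_le_ofReal
        have := hn.2.2
        rw [(hun n).2, hxm] at this
        linarith
      calc Filter.liminf (F D) l ≤ ENNReal.ofReal (m + δ) := liminf_le_of_frequently_le' hfreq
        _ = ENNReal.ofReal m + ENNReal.ofReal δ := ENNReal.ofReal_add hmpos.le hδ'.le
        _ = ENNReal.ofReal m + δ := by rw [ENNReal.ofReal_coe_nnreal]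
    · apply ENNReal.le_of_forall_pos_le_add
      intro δ hδ _
      have hδ' : (0:ℝ) < δ := hδ
      have hub : ∀ᶠ t in l, ENNReal.ofReal (m - δ) ≤ F D t := by
        filter_upwards [hsand' δ hδ'] with t ht
        rw [hFD t ht.1]
        exact ENNReal.ofReal_le_ofReal ht.2.1
      have h1 : ENNReal.ofReal (m - δ) ≤ Filter.liminf (F D) l :=
        le_liminf_of_le (by isBoundedDefault) hub
      calc ENNReal.ofReal m ≤ ENNReal.ofReal (m - δ) + ENNReal.ofReal δ := by
            refine le_trans (ENNReal.ofReal_le_ofReal (by linarith : m ≤ (m - δ) + δ)) ?_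
            exact ENNReal.ofReal_add_le
        _ ≤ Filter.liminf (F D) l + ENNReal.ofReal δ := add_le_add_left h1 _
        _ = Filter.liminf (F D) l + δ := by rw [ENNReal.ofReal_coe_nnreal]
  -- contents at D
  have hupperD : upperMinkowskiContent N A D = ENNReal.ofReal M := hlimsup
  have hlowerD : lowerMinkowskiContent N A D = ENNReal.ofReal m := hliminf
  -- for r > D : contents vanish
  have hzero : ∀ r : ℝ, D < r → upperMinkowskiContent N A r = 0 := by
    intro r hr
    have hub : ∀ᶠ t in l, F r t ≤ ENNReal.ofReal ((M + 1) * t ^ (r - D)) := by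
      filter_upwards [hsand' 1 one_pos] with t ht
      rw [hFdef]; simp only
      rw [hF r t ht.1]
      exact ENNReal.ofReal_le_ofReal
        (mul_le_mul_of_nonneg_right ht.2.2 (Real.rpow_pos_of_pos ht.1 _).le)
    have htend : Filter.Tendsto (fun t : ℝ => ENNReal.ofReal ((M + 1) * t ^ (r - D))) l
        (nhds 0) := by
      have h0 : Filter.Tendsto (fun t : ℝ => t ^ (r - D)) (nhds 0) (nhds (0:ℝ)) := by
        have := (Real.continuousAt_rpow_const 0 (r - D) (Or.inr (by linarith))).tendsto
        simpa [Real.zero_rpow (sub_ne_zero.mpr (ne_of_gt hr))] using this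
      have h1 : Filter.Tendsto (fun t : ℝ => (M + 1) * t ^ (r - D)) l (nhds 0) := by
        have h0' : Filter.Tendsto (fun t : ℝ => t ^ (r - D)) l (nhds (0:ℝ)) := by
          rw [hl]; exact h0.mono_left nhdsWithin_le_nhds
        have := h0'.const_mul (M + 1)
        simpa using this
      have : Filter.Tendsto (fun t : ℝ => ENNReal.ofReal ((M + 1) * t ^ (r - D))) l
          (nhds (ENNReal.ofReal 0)) := (ENNReal.continuous_ofReal.tendsto 0).comp h1
      simpa using this
    have h2 : Filter.limsup (F r) l ≤ 0 := by
      calc Filter.limsup (F r) l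
          ≤ Filter.limsup (fun t : ℝ => ENNReal.ofReal ((M + 1) * t ^ (r - D))) l :=
            Filter.limsup_le_limsup hub
        _ = 0 := htend.limsup_eq
    exact le_antisymm h2 zero_le
  have hzero' : ∀ r : ℝ, D < r → lowerMinkowskiContent N A r = 0 := by
    intro r hr
    have h1 : lowerMinkowskiContent N A r ≤ upperMinkowskiContent N A r :=
      Filter.liminf_le_limsup
    rw [hzero r hr] at h1
    exact le_antisymm h1 zero_le
  -- for r ≤ D : contents are bounded below
  have hpos' : ∀ r : ℝ, r ≤ D → ENNReal.ofReal (m / 2) ≤ lowerMinkowskiContent N A r := by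
    intro r hr
    have hub : ∀ᶠ t in l, ENNReal.ofReal (m / 2) ≤ F r t := by
      have h1 : Set.Ioo (0:ℝ) 1 ∈ l := by
        rw [hl]; exact Ioo_mem_nhdsGT_of_mem ⟨le_refl _, one_pos⟩
      filter_upwards [hsand' (m/2) (by linarith), h1] with t ht ht1
      rw [hFdef]; simp only
      rw [hF r t ht.1]
      apply ENNReal.ofReal_le_ofReal
      have h2 : (1:ℝ) ≤ t ^ (r - D) :=
        Real.one_le_rpow_of_pos_of_le_one_of_nonpos ht1.1 ht1.2.le (by linarith)
      have h3 : m / 2 ≤ g t := by linarith [ht.2.1]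
      calc m / 2 = m / 2 * 1 := (mul_one _).symm
        _ ≤ g t * t ^ (r - D) :=
            mul_le_mul h3 h2 zero_le_one (hgnonneg t ht.1)
    exact le_liminf_of_le (by isBoundedDefault) hub
  have hposU : ∀ r : ℝ, r ≤ D → ENNReal.ofReal (m / 2) ≤ upperMinkowskiContent N A r := by
    intro r hr
    exact le_trans (hpos' r hr) Filter.liminf_le_limsup
  have hm2pos : (0:ENNReal) < ENNReal.ofReal (m / 2) := ENNReal.ofReal_pos.mpr (by linarith)
  -- the dimension sets
  have hSu : {r : ℝ | upperMinkowskiContent N A r = 0} = Set.Ioi D := by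
    ext r
    simp only [Set.mem_setOf_eq, Set.mem_Ioi]
    constructor
    · intro h
      by_contra hc
      push_neg at hc
      have := hposU r hc
      rw [h] at this
      exact absurd (le_antisymm this zero_le) (ne_of_gt hm2pos)
    · exact hzero r
  have hSl : {r : ℝ | lowerMinkowskiContent N A r = 0} = Set.Ioi D := by
    ext r
    simp only [Set.mem_setOf_eq, Set.mem_Ioi]
    constructor
    · intro h
      by_contra hc
      push_neg at hc
      have := hpos' r hc
      rw [h] at this
      exact absurd (le_antisymm this zero_le) (ne_of_gt hm2pos)
    · exact hzero' r
  refine ⟨?_, ?_, hlowerD, hupperD, ?_, ?_, ?_⟩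
  · rw [upperBoxDim, hSu]; exact csInf_Ioi
  · rw [lowerBoxDim, hSl]; exact csInf_Ioi
  · rw [hlowerD]; exact ENNReal.ofReal_pos.mpr hmpos
  · rw [hupperD]; exact ENNReal.ofReal_lt_top
  · rw [hlowerD, hupperD]
    intro h
    have := (ENNReal.ofReal_eq_ofReal_iff hmpos.le (le_trans hmpos.le (hmM.le))).mp h
    exact absurd this (ne_of_lt hmM)
end

section
/- Let β < 1 and let (c_j)_{j≥1} be a sequence of real numbers with c_j = O(j^β) as j → ∞ (and j + c_j > 0 for all j). Then the perturbed Riemann zeta function ζ_pert(s) := Σ_{j=1}^∞ (j + c_j)^{-s}, initially convergent for Re(s) > 1, admits a meromorphic continuation to the open half-plane {Re(s) > β}, whose only pole there is a simple pole at s = 1 with residue 1. -/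
open Filter Complex Topology

private lemma diff_bound_mono (s : ℂ) {a b : ℝ} (hb : 0 < b) (hba : b ≤ a) :
    ‖((a : ℝ) : ℂ) ^ (-s) - ((b : ℝ) : ℂ) ^ (-s)‖ ≤
      ‖s‖ * (a - b) * (b ^ (-s.re - 1) + a ^ (-s.re - 1)) := by
  rcases eq_or_ne s 0 with rfl | hs
  · simp
  have ha : 0 < a := lt_of_lt_of_le hb hba
  set e : ℝ := -s.re - 1 with he
  have hCbound : ∀ x ∈ Set.Icc b a, ‖-s * ((x : ℝ) : ℂ) ^ (-s - 1)‖ ≤ ‖s‖ * (b ^ e + a ^ e) := by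
    intro x hx
    have hx0 : 0 < x := lt_of_lt_of_le hb hx.1
    rw [norm_mul, norm_neg]
    have hnorm : ‖((x : ℝ) : ℂ) ^ (-s - 1)‖ = x ^ e := by
      rw [Complex.norm_cpow_eq_rpow_re_of_pos hx0]
      congr 1
    rw [hnorm]
    have hxe : x ^ e ≤ b ^ e + a ^ e := by
      rcases le_or_gt e 0 with h | h
      · have h1 : x ^ e ≤ b ^ e := Real.rpow_le_rpow_of_nonpos hb hx.1 h
        have h2 : (0:ℝ) ≤ a ^ e := Real.rpow_nonneg ha.le _
        linarith
      · have h1 : x ^ e ≤ a ^ e := Real.rpow_le_rpow hx0.le hx.2 h.le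
        have h2 : (0:ℝ) ≤ b ^ e := Real.rpow_nonneg hb.le _
        linarith
    have := mul_le_mul_of_nonneg_left hxe (norm_nonneg s)
    linarith
  have hderiv : ∀ x ∈ Set.Icc b a,
      HasDerivWithinAt (fun y : ℝ => ((y : ℝ) : ℂ) ^ (-s)) (-s * ((x : ℝ) : ℂ) ^ (-s - 1))
        (Set.Icc b a) x := by
    intro x hx
    have hx0 : (x : ℝ) ≠ 0 := (lt_of_lt_of_le hb hx.1).ne'
    have hr : (-s - 1 : ℂ) ≠ -1 := by
      intro h
      apply hs
      linear_combination -h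
    have h := (hasDerivAt_ofReal_cpow_const' hx0 hr).const_mul (-s)
    have hne : (-s : ℂ) ≠ 0 := neg_ne_zero.mpr hs
    have key : (fun y : ℝ => -s * (((y : ℝ) : ℂ) ^ (-s - 1 + 1) / (-s - 1 + 1)))
        = fun y : ℝ => ((y : ℝ) : ℂ) ^ (-s) := by
      funext y
      have h1 : (-s - 1 + 1 : ℂ) = -s := by ring
      rw [h1]
      field_simp
    rw [key] at h
    exact h.hasDerivWithinAt
  have := norm_image_sub_le_of_norm_deriv_le_segment' hderiv
    (fun x hx => hCbound x (Set.mem_Icc_of_Ico hx)) a (Set.right_mem_Icc.mpr hba)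
  calc ‖((a : ℝ) : ℂ) ^ (-s) - ((b : ℝ) : ℂ) ^ (-s)‖
      ≤ ‖s‖ * (b ^ e + a ^ e) * (a - b) := this
    _ = ‖s‖ * (a - b) * (b ^ e + a ^ e) := by ring

private lemma diff_bound (s : ℂ) {a b : ℝ} (ha : 0 < a) (hb : 0 < b) :
    ‖((a : ℝ) : ℂ) ^ (-s) - ((b : ℝ) : ℂ) ^ (-s)‖ ≤
      ‖s‖ * |a - b| * (min a b ^ (-s.re - 1) + max a b ^ (-s.re - 1)) := by
  rcases le_total b a with h | h
  · rw [_root_.abs_of_nonneg (by linarith), min_eq_right h, max_eq_left h]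
    exact diff_bound_mono s hb h
  · rw [← norm_sub_rev, _root_.abs_of_nonpos (by linarith), min_eq_left h, max_eq_right h]
    have := diff_bound_mono s ha h
    calc ‖((b : ℝ) : ℂ) ^ (-s) - ((a : ℝ) : ℂ) ^ (-s)‖
        ≤ ‖s‖ * (b - a) * (a ^ (-s.re - 1) + b ^ (-s.re - 1)) := this
      _ = ‖s‖ * -(a - b) * (a ^ (-s.re - 1) + b ^ (-s.re - 1)) := by ring

private noncomputable def gterm (c : ℕ → ℝ) (j : ℕ) (s : ℂ) : ℂ :=
  ((((j : ℝ) + 1) + c (j + 1) : ℝ) : ℂ) ^ (-s) - (((j : ℝ) + 1 : ℝ) : ℂ) ^ (-s)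

private lemma gterm_differentiable (c : ℕ → ℝ)
    (hpos : ∀ j : ℕ, 0 < ((j : ℝ) + 1) + c (j + 1)) (j : ℕ) :
    Differentiable ℂ (gterm c j) := by
  have h : ∀ x : ℝ, 0 < x → Differentiable ℂ fun s : ℂ => ((x : ℝ) : ℂ) ^ (-s) := by
    intro x hx
    exact differentiable_neg.const_cpow (Or.inl (by exact_mod_cast hx.ne'))
  exact (h _ (hpos j)).sub (h _ (by positivity))

private lemma gterm_bound (c : ℕ → ℝ) {β C : ℝ} (hC0 : 0 < C)
    (hCb : ∀ j : ℕ, |c (j + 1)| ≤ C * ((j : ℝ) + 1) ^ β)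
    (hpos : ∀ j : ℕ, 0 < ((j : ℝ) + 1) + c (j + 1))
    {j : ℕ} (hj : C * ((j : ℝ) + 1) ^ β ≤ ((j : ℝ) + 1) / 2)
    {σ₀ σ₁ M : ℝ} {s : ℂ} (hs0 : σ₀ ≤ s.re) (hs1 : s.re ≤ σ₁) (hsM : ‖s‖ ≤ M) :
    ‖gterm c j s‖ ≤
      M * C * (2 ^ (σ₁ + 1) + 2 ^ (-σ₀ - 1)) * 2 * ((j : ℝ) + 1) ^ (β - σ₀ - 1) := by
  have hj0 : (0:ℝ) ≤ (j : ℝ) := Nat.cast_nonneg j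
  set B : ℝ := (j : ℝ) + 1 with hB
  have hB1 : 1 ≤ B := by rw [hB]; linarith
  have hBpos : 0 < B := by linarith
  set A : ℝ := B + c (j + 1) with hA
  have hApos : 0 < A := hpos j
  have hc : |c (j + 1)| ≤ C * B ^ β := hCb j
  have hcB : |c (j + 1)| ≤ B / 2 := le_trans hc hj
  obtain ⟨hc1, hc2⟩ := abs_le.mp hcB
  have hA2 : B / 2 ≤ A := by rw [hA]; linarith
  have hA3 : A ≤ 2 * B := by rw [hA]; linarith
  set e : ℝ := -s.re - 1 with he
  set E : ℝ := -σ₀ - 1 with hE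
  set K : ℝ := 2 ^ (σ₁ + 1) + 2 ^ E with hK
  have hxK : ∀ x : ℝ, B / 2 ≤ x → x ≤ 2 * B → x ^ e ≤ K * B ^ E := by
    intro x hx1 hx2
    have hx0 : 0 < x := lt_of_lt_of_le (by linarith) hx1
    have hBe : B ^ e ≤ B ^ E :=
      Real.rpow_le_rpow_of_exponent_le hB1 (by rw [he, hE]; linarith)
    have hpos1 : (0:ℝ) ≤ 2 ^ E * B ^ E := by positivity
    have h6 : K * B ^ E = B ^ E * 2 ^ (σ₁ + 1) + 2 ^ E * B ^ E := by rw [hK]; ring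
    rcases le_or_gt e 0 with h | h
    · have h1 : x ^ e ≤ (B / 2) ^ e := Real.rpow_le_rpow_of_nonpos (by linarith) hx1 h
      have h2 : (B / 2) ^ e = B ^ e * 2 ^ (-e) := by
        rw [Real.div_rpow hBpos.le (by norm_num : (0:ℝ) ≤ 2), div_eq_mul_inv,
          Real.rpow_neg (by norm_num : (0:ℝ) ≤ 2)]
      have h3 : (2:ℝ) ^ (-e) ≤ 2 ^ (σ₁ + 1) :=
        Real.rpow_le_rpow_of_exponent_le one_le_two (by rw [he]; linarith)
      have h4 : B ^ e * 2 ^ (-e) ≤ B ^ E * 2 ^ (σ₁ + 1) :=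
        mul_le_mul hBe h3 (Real.rpow_nonneg (by norm_num) _) (Real.rpow_nonneg hBpos.le _)
      rw [h2] at h1
      linarith
    · have h1 : x ^ e ≤ (2 * B) ^ e := Real.rpow_le_rpow hx0.le hx2 h.le
      have h2 : (2 * B) ^ e = 2 ^ e * B ^ e :=
        Real.mul_rpow (by norm_num) hBpos.le
      have h3 : (2:ℝ) ^ e ≤ 2 ^ E :=
        Real.rpow_le_rpow_of_exponent_le one_le_two (by rw [he, hE]; linarith)
      have h4 : 2 ^ e * B ^ e ≤ 2 ^ E * B ^ E :=
        mul_le_mul h3 hBe (Real.rpow_nonneg hBpos.le _) (Real.rpow_nonneg (by norm_num) _)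
      have h5 : (0:ℝ) ≤ B ^ E * 2 ^ (σ₁ + 1) := by positivity
      rw [h2] at h1
      linarith
  have hmin : B / 2 ≤ min A B := le_min hA2 (by linarith)
  have hminU : min A B ≤ 2 * B := le_trans (min_le_right _ _) (by linarith)
  have hmaxL : B / 2 ≤ max A B := le_trans (by linarith) (le_max_right A B)
  have hmaxU : max A B ≤ 2 * B := max_le hA3 (by linarith)
  have hab : |A - B| = |c (j + 1)| := by rw [hA]; congr 1; ring
  have step1 : ‖gterm c j s‖ ≤ ‖s‖ * |A - B| * (min A B ^ e + max A B ^ e) := by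
    have := diff_bound s hApos hBpos
    rw [← he] at this
    exact this
  have step2 : ‖s‖ * |A - B| * (min A B ^ e + max A B ^ e)
      ≤ M * (C * B ^ β) * (K * B ^ E + K * B ^ E) := by
    have h1 := hxK _ hmin hminU
    have h2 := hxK _ hmaxL hmaxU
    have habC : |A - B| ≤ C * B ^ β := by rw [hab]; exact hc
    have hminpos : 0 < min A B := lt_min hApos hBpos
    have hmaxpos : 0 < max A B := lt_of_lt_of_le hApos (le_max_left A B)
    have m1 : ‖s‖ * |A - B| ≤ M * (C * B ^ β) :=
      mul_le_mul hsM habC (abs_nonneg _) ((norm_nonneg s).trans hsM)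
    have m2 : min A B ^ e + max A B ^ e ≤ K * B ^ E + K * B ^ E := add_le_add h1 h2
    exact mul_le_mul m1 m2
      (add_nonneg (Real.rpow_nonneg hminpos.le e) (Real.rpow_nonneg hmaxpos.le e))
      (mul_nonneg ((norm_nonneg s).trans hsM) (mul_nonneg hC0.le (Real.rpow_nonneg hBpos.le β)))
  have step3 : M * (C * B ^ β) * (K * B ^ E + K * B ^ E)
      = M * C * K * 2 * B ^ (β - σ₀ - 1) := by
    rw [show M * (C * B ^ β) * (K * B ^ E + K * B ^ E)
        = M * C * K * 2 * (B ^ β * B ^ E) from by ring, ← Real.rpow_add hBpos,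
      show β + E = β - σ₀ - 1 from by rw [hE]; ring]
  linarith

private lemma Zdiff :
    Differentiable ℂ (Function.update (fun s : ℂ => (s - 1) * riemannZeta s) 1 1) := by
  set Z := Function.update (fun s : ℂ => (s - 1) * riemannZeta s) 1 1 with hZ
  have hne : ∀ x : ℂ, x ≠ 1 → DifferentiableAt ℂ Z x := by
    intro x hx
    refine DifferentiableAt.congr_of_eventuallyEq
      ((differentiableAt_id.sub_const 1).mul (differentiableAt_riemannZeta hx)) ?_
    filter_upwards [isOpen_compl_singleton.mem_nhds hx] with y hy
    exact Function.update_of_ne hy _ _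
  intro z
  rcases eq_or_ne z 1 with rfl | hz
  · have hcont : ContinuousAt Z 1 := by
      rw [ContinuousAt]
      have hz1 : Z 1 = 1 := Function.update_self _ _ _
      rw [hz1]
      nth_rewrite 1 [← nhdsNE_sup_pure (1 : ℂ)]
      rw [tendsto_sup]
      constructor
      · refine riemannZeta_residue_one.congr' ?_
        filter_upwards [self_mem_nhdsWithin] with y hy
        simp [hZ, Function.update_of_ne hy]
      · rw [tendsto_pure_left]
        intro U hU
        simpa [hz1] using mem_of_mem_nhds hU
    have han := Complex.analyticAt_of_differentiable_on_punctured_nhds_of_continuousAt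
      (f := Z) (c := 1) ?_ hcont
    · exact han.differentiableAt
    · filter_upwards [self_mem_nhdsWithin] with x hx
      exact hne x hx
  · exact hne z hz

/-- Perturbed Riemann zeta function: if `c_j = O(j^β)` with `β < 1` (and `j + c_j > 0`),
then `ζ_pert(s) = ∑_{j≥1} (j + c_j)^{-s}` admits a meromorphic continuation to
`{Re s > β}` whose only pole there is a simple pole at `s = 1` with residue `1`.
(Formulated via the holomorphic function `(s-1)·ζ_pert(s)`.) -/
theorem stmt_13 (β : ℝ) (hβ : β < 1) (c : ℕ → ℝ)
    (hO : ∃ C : ℝ, 0 < C ∧ ∀ j : ℕ, |c (j + 1)| ≤ C * ((j : ℝ) + 1) ^ β)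
    (hpos : ∀ j : ℕ, 0 < ((j : ℝ) + 1) + c (j + 1)) :
    ∃ F : ℂ → ℂ,
      DifferentiableOn ℂ F {s : ℂ | β < s.re} ∧
      (∀ s : ℂ, 1 < s.re →
        F s = (s - 1) * ∑' j : ℕ, ((((j : ℝ) + 1) + c (j + 1) : ℝ) : ℂ) ^ (-s)) ∧
      F 1 = 1 := by
  obtain ⟨C, hC0, hCb⟩ := hO
  -- choice of the tail cutoff `N`
  have htend : Tendsto (fun j : ℕ => C * ((j : ℝ) + 1) ^ (β - 1)) atTop (𝓝 (C * 0)) := by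
    apply Tendsto.const_mul
    have h1 : Tendsto (fun j : ℕ => ((j : ℝ) + 1)) atTop atTop :=
      tendsto_atTop_add_const_right _ _ tendsto_natCast_atTop_atTop
    have h2 : Tendsto (fun x : ℝ => x ^ (β - 1)) atTop (𝓝 0) := by
      have h3 := tendsto_rpow_neg_atTop (y := 1 - β) (by linarith)
      simpa [show -(1 - β) = β - 1 by ring] using h3
    exact h2.comp h1
  rw [mul_zero] at htend
  have hev := htend.eventually_lt_const (show (0:ℝ) < 1/2 by norm_num)
  rw [eventually_atTop] at hev
  obtain ⟨N, hN⟩ := hev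
  have hN' : ∀ j : ℕ, N ≤ j → C * ((j : ℝ) + 1) ^ β ≤ ((j : ℝ) + 1) / 2 := by
    intro j hj
    have h0 : (0:ℝ) < (j : ℝ) + 1 := by positivity
    have h1 := hN j hj
    have h2 : ((j : ℝ) + 1) ^ β = ((j : ℝ) + 1) ^ (β - 1) * ((j : ℝ) + 1) := by
      rw [← Real.rpow_add_one h0.ne']
      norm_num
    rw [h2]
    calc C * (((j : ℝ) + 1) ^ (β - 1) * ((j : ℝ) + 1))
        = (C * ((j : ℝ) + 1) ^ (β - 1)) * ((j : ℝ) + 1) := by ring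
      _ ≤ (1/2) * ((j : ℝ) + 1) := mul_le_mul_of_nonneg_right h1.le h0.le
      _ = ((j : ℝ) + 1) / 2 := by ring
  -- summability of the comparison series
  have hsumE : ∀ σ₀ : ℝ, β < σ₀ → Summable (fun n : ℕ => ((n : ℝ) + 1) ^ (β - σ₀ - 1)) := by
    intro σ₀ h
    have h1 : Summable (fun n : ℕ => ((n : ℝ)) ^ (β - σ₀ - 1)) :=
      Real.summable_nat_rpow.mpr (by linarith)
    have h2 := (summable_nat_add_iff 1).mpr h1
    refine h2.congr fun n => ?_
    push_cast
    ring_nf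
  have hgd : ∀ j : ℕ, Differentiable ℂ (gterm c j) := gterm_differentiable c hpos
  -- differentiability of the tail sum
  have hD : ∀ s₀ : ℂ, β < s₀.re →
      DifferentiableAt ℂ (fun s : ℂ => ∑' j : ℕ, gterm c (j + N) s) s₀ := by
    intro s₀ hs₀
    set r : ℝ := (s₀.re - β) / 2 with hr
    have hr0 : 0 < r := by rw [hr]; linarith
    set σ₀ : ℝ := s₀.re - r with hσ₀
    set σ₁ : ℝ := s₀.re + r with hσ₁
    set M : ℝ := ‖s₀‖ + r with hM
    have hβσ₀ : β < σ₀ := by rw [hσ₀, hr]; linarith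
    have key : DifferentiableOn ℂ (fun s : ℂ => ∑' j : ℕ, gterm c (j + N) s)
        (Metric.ball s₀ r) := by
      apply differentiableOn_tsum_of_summable_norm
        (u := fun j : ℕ => M * C * (2 ^ (σ₁ + 1) + 2 ^ (-σ₀ - 1)) * 2 *
          (((j + N : ℕ) : ℝ) + 1) ^ (β - σ₀ - 1))
      · exact ((summable_nat_add_iff N).mpr (hsumE σ₀ hβσ₀)).mul_left _
      · exact fun j => (hgd (j + N)).differentiableOn
      · exact Metric.isOpen_ball
      · intro j w hw
        have hd : ‖w - s₀‖ < r := by rwa [Metric.mem_ball, dist_eq_norm] at hw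
        have hre : |(w - s₀).re| ≤ ‖w - s₀‖ := by
          exact Complex.abs_re_le_norm (w - s₀)
        rw [Complex.sub_re] at hre
        obtain ⟨hre1, hre2⟩ := abs_le.mp hre
        have hw0 : σ₀ ≤ w.re := by rw [hσ₀]; linarith
        have hw1 : w.re ≤ σ₁ := by rw [hσ₁]; linarith
        have hwM : ‖w‖ ≤ M := by
          have h5 := norm_sub_norm_le w s₀
          rw [hM]; linarith
        exact gterm_bound c hC0 hCb hpos (hN' (j + N) (Nat.le_add_left N j)) hw0 hw1 hwM
    exact key.differentiableAt (Metric.isOpen_ball.mem_nhds (Metric.mem_ball_self hr0))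
  -- pointwise summability of the perturbation series
  have hgs : ∀ s : ℂ, β < s.re → Summable (fun j : ℕ => gterm c j s) := by
    intro s hs
    have htail : Summable (fun j : ℕ => gterm c (j + N) s) := by
      apply Summable.of_norm
      apply Summable.of_nonneg_of_le (fun j => norm_nonneg _)
        (fun j => gterm_bound c hC0 hCb hpos (hN' (j + N) (Nat.le_add_left N j))
          le_rfl le_rfl le_rfl)
      exact ((summable_nat_add_iff N).mpr (hsumE s.re hs)).mul_left _
    exact (summable_nat_add_iff N).mp htail
  -- zeta-side summability
  have hsumb : ∀ s : ℂ, 1 < s.re →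
      Summable (fun j : ℕ => (((j : ℝ) + 1 : ℝ) : ℂ) ^ (-s)) := by
    intro s hs
    have h0 := Complex.summable_one_div_nat_cpow.mpr hs
    have h1 := (summable_nat_add_iff 1).mpr h0
    refine h1.congr fun n => ?_
    rw [Complex.cpow_neg, ← one_div]
    congr 2
    push_cast
    ring
  refine ⟨fun s => Function.update (fun s : ℂ => (s - 1) * riemannZeta s) 1 1 s
      + (s - 1) * (∑ j ∈ Finset.range N, gterm c j s)
      + (s - 1) * ∑' j : ℕ, gterm c (j + N) s, ?_, ?_, ?_⟩
  · intro s hs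
    simp only [Set.mem_setOf_eq] at hs
    apply DifferentiableAt.differentiableWithinAt
    exact ((Zdiff s).add ((differentiableAt_id.sub_const 1).mul
      (DifferentiableAt.fun_sum fun j _ => (hgd j).differentiableAt))).add
      ((differentiableAt_id.sub_const 1).mul (hD s hs))
  · intro s hs
    have hs2 : β < s.re := lt_trans hβ hs
    have hs1 : s ≠ 1 := by
      intro h
      rw [h] at hs
      simp at hs
    have hZs : Function.update (fun s : ℂ => (s - 1) * riemannZeta s) 1 1 s
        = (s - 1) * riemannZeta s := Function.update_of_ne hs1 _ _
    have hg := hgs s hs2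
    have hb := hsumb s hs
    have hzeta : riemannZeta s = ∑' j : ℕ, (((j : ℝ) + 1 : ℝ) : ℂ) ^ (-s) := by
      rw [zeta_eq_tsum_one_div_nat_add_one_cpow hs]
      refine tsum_congr fun n => ?_
      rw [Complex.cpow_neg, ← one_div]
      congr 2
      push_cast
      ring
    have htsum : ∑' j : ℕ, ((((j : ℝ) + 1) + c (j + 1) : ℝ) : ℂ) ^ (-s)
        = (∑' j : ℕ, gterm c j s) + ∑' j : ℕ, (((j : ℝ) + 1 : ℝ) : ℂ) ^ (-s) := by
      rw [← Summable.tsum_add hg hb]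
      refine tsum_congr fun j => ?_
      rw [gterm]
      ring
    have hsplit : (∑ j ∈ Finset.range N, gterm c j s) + ∑' j : ℕ, gterm c (j + N) s
        = ∑' j : ℕ, gterm c j s := Summable.sum_add_tsum_nat_add N hg
    beta_reduce
    rw [hZs, hzeta, htsum, ← hsplit]
    ring
  · simp
end

section
/- Let (A₀, Ω₀) be a relative fractal drum with Dirichlet eigenvalues (μ_k^{(0)})_{k≥1} and spectral zeta function ζ*₀(s) = Σ_k (μ_k^{(0)})^{-s/2} (abscissa of convergence D₀), and let L = (λ_j)_{j≥1} be a fractal string with geometric zeta function ζ_L(s) = Σ_j λ_j^s (abscissa of convergence D_L). If the relative fractal spray (A, Ω) is the disjoint union of scaled isometric copies λ_j(A₀,Ω₀), then its spectral zeta function satisfies ζ*_{(A,Ω)}(s) = ζ*₀(s) · ζ_L(s) for Re(s) > max(D₀, D_L), and D(ζ*_{(A,Ω)}) = max(D₀, D_L). -/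
set_option maxHeartbeats 1000000


open Filter Complex

private lemma summable_rpow_of_le {f : ℕ → ℝ} (hpos : ∀ k, 0 < f k)
    (hle : ∀ᶠ k in Filter.atTop, f k ≤ 1) {a b : ℝ} (hab : a ≤ b)
    (hsum : Summable fun k => f k ^ a) : Summable fun k => f k ^ b := by
  obtain ⟨N, hN⟩ := Filter.eventually_atTop.1 hle
  rw [← summable_nat_add_iff N] at hsum ⊢
  exact Summable.of_nonneg_of_le (fun k => (Real.rpow_pos_of_pos (hpos _) _).le)
    (fun k => Real.rpow_le_rpow_of_exponent_ge (hpos _) (hN _ (by omega)) hab) hsum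

private lemma nonneg_of_summable_rpow {f : ℕ → ℝ} (hpos : ∀ k, 0 < f k)
    (hle : ∀ᶠ k in Filter.atTop, f k ≤ 1) {σ : ℝ}
    (hsum : Summable fun k => f k ^ σ) : 0 ≤ σ := by
  by_contra h
  push_neg at h
  have h0 : ∀ᶠ k in Filter.atTop, f k ^ σ < 1 :=
    (hsum.tendsto_atTop_zero).eventually_lt_const (by norm_num)
  have h1 : ∀ᶠ k in Filter.atTop, (1:ℝ) ≤ f k ^ σ := by
    filter_upwards [hle] with k hk
    calc (1:ℝ) = f k ^ (0:ℝ) := (Real.rpow_zero _).symm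
    _ ≤ f k ^ σ := Real.rpow_le_rpow_of_exponent_ge (hpos k) hk h.le
  obtain ⟨k, hk1, hk2⟩ := (h0.and h1).exists
  exact absurd hk2 (not_le.2 hk1)

private lemma mem_of_csInf_lt {S : Set ℝ} (hne : S.Nonempty)
    (hup : ∀ {a b : ℝ}, a ≤ b → a ∈ S → b ∈ S) {σ : ℝ} (h : sInf S < σ) : σ ∈ S := by
  obtain ⟨t, ht, hlt⟩ := exists_lt_of_csInf_lt hne h
  exact hup hlt.le ht

/-- Spectral zeta function of a relative fractal spray: if `(A,Ω)` is the disjoint union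
of scaled copies `λ_j (A₀, Ω₀)` of a base drum with Dirichlet eigenvalues `(μ_k)`, then
its eigenvalues are `λ_j^{-2} μ_k`, and `ζ*_{(A,Ω)}(s) = ζ*₀(s) · ζ_L(s)` for
`Re s > max(D₀, D_L)`; moreover `D(ζ*_{(A,Ω)}) = max(D₀, D_L)`. -/
theorem stmt_17 (μ : ℕ → ℝ) (hμpos : ∀ k, 0 < μ k) (hμmono : Monotone μ)
    (hμtop : Filter.Tendsto μ Filter.atTop Filter.atTop)
    (lam : ℕ → ℝ) (hlpos : ∀ j, 0 < lam j) (hlmono : Antitone lam)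
    (hlsum : Summable lam)
    (D₀ : ℝ) (hD₀ : D₀ = sInf {σ : ℝ | Summable fun k : ℕ => μ k ^ (-σ / 2)})
    (hD₀fin : ∃ σ : ℝ, Summable fun k : ℕ => μ k ^ (-σ / 2))
    (DL : ℝ) (hDL : DL = sInf {σ : ℝ | Summable fun j : ℕ => lam j ^ σ}) :
    (∀ s : ℂ, max D₀ DL < s.re →
      ∑' p : ℕ × ℕ, (((lam p.1 ^ (-(2 : ℝ)) * μ p.2 : ℝ)) : ℂ) ^ (-s / 2)
        = (∑' k : ℕ, ((μ k : ℝ) : ℂ) ^ (-s / 2)) * ∑' j : ℕ, ((lam j : ℝ) : ℂ) ^ s) ∧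
    sInf {σ : ℝ | Summable fun p : ℕ × ℕ => (lam p.1 ^ (-(2 : ℝ)) * μ p.2) ^ (-σ / 2)}
      = max D₀ DL := by
  -- auxiliary positive sequence ν with μ k ^ (-σ/2) = ν k ^ σ
  set ν : ℕ → ℝ := fun k => μ k ^ (-(1/2) : ℝ) with hν
  have hνpos : ∀ k, 0 < ν k := fun k => Real.rpow_pos_of_pos (hμpos k) _
  have hνle : ∀ᶠ k in Filter.atTop, ν k ≤ 1 := by
    filter_upwards [hμtop.eventually_ge_atTop 1] with k hk
    exact Real.rpow_le_one_of_one_le_of_nonpos hk (by norm_num)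
  have hνeq : ∀ (σ : ℝ) (k : ℕ), μ k ^ (-σ / 2) = ν k ^ σ := by
    intro σ k
    rw [hν, ← Real.rpow_mul (hμpos k).le]
    ring_nf
  have hlle : ∀ᶠ j in Filter.atTop, lam j ≤ 1 :=
    (hlsum.tendsto_atTop_zero).eventually_le_const (by norm_num)
  -- the three summability sets
  set Sμ : Set ℝ := {σ : ℝ | Summable fun k : ℕ => μ k ^ (-σ / 2)} with hSμ
  set SL : Set ℝ := {σ : ℝ | Summable fun j : ℕ => lam j ^ σ} with hSL
  set SP : Set ℝ :=
    {σ : ℝ | Summable fun p : ℕ × ℕ => (lam p.1 ^ (-(2 : ℝ)) * μ p.2) ^ (-σ / 2)} with hSP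
  -- real term identity
  have hterm : ∀ (σ : ℝ) (j k : ℕ),
      (lam j ^ (-(2 : ℝ)) * μ k) ^ (-σ / 2) = lam j ^ σ * μ k ^ (-σ / 2) := by
    intro σ j k
    rw [Real.mul_rpow (Real.rpow_pos_of_pos (hlpos j) _).le (hμpos k).le,
      ← Real.rpow_mul (hlpos j).le]
    congr 1
    ring
  -- SP = SL ∩ Sμ
  have hSPiff : ∀ σ : ℝ, σ ∈ SP ↔ σ ∈ SL ∧ σ ∈ Sμ := by
    intro σ
    simp only [hSP, hSL, hSμ, Set.mem_setOf_eq]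
    constructor
    · intro h
      have h' : Summable fun p : ℕ × ℕ => lam p.1 ^ σ * μ p.2 ^ (-σ / 2) := by
        exact h.congr fun p => hterm σ p.1 p.2
      constructor
      · have h1 : Summable fun j : ℕ => lam j ^ σ * μ 0 ^ (-σ / 2) :=
          h'.comp_injective (i := fun j : ℕ => ((j, 0) : ℕ × ℕ))
            (fun a b hab => by simpa using hab)
        exact (summable_mul_right_iff (Real.rpow_pos_of_pos (hμpos 0) _).ne').1 h1
      · have h1 : Summable fun k : ℕ => lam 0 ^ σ * μ k ^ (-σ / 2) :=
          h'.comp_injective (i := fun k : ℕ => ((0, k) : ℕ × ℕ))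
            (fun a b hab => by simpa using hab)
        have h2 : Summable fun k : ℕ => μ k ^ (-σ / 2) * lam 0 ^ σ := by
          exact h1.congr fun k => mul_comm _ _
        exact (summable_mul_right_iff (Real.rpow_pos_of_pos (hlpos 0) _).ne').1 h2
    · rintro ⟨h1, h2⟩
      have h' : Summable fun p : ℕ × ℕ => lam p.1 ^ σ * μ p.2 ^ (-σ / 2) :=
        h1.mul_of_nonneg h2 (fun j => (Real.rpow_pos_of_pos (hlpos j) _).le)
          (fun k => (Real.rpow_pos_of_pos (hμpos k) _).le)
      exact h'.congr fun p => (hterm σ p.1 p.2).symm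
  -- upward closure
  have hupμ : ∀ {a b : ℝ}, a ≤ b → a ∈ Sμ → b ∈ Sμ := by
    intro a b hab ha
    have h1 : Summable fun k => ν k ^ a := ha.congr (hνeq a)
    exact (summable_rpow_of_le hνpos hνle hab h1).congr fun k => (hνeq b k).symm
  have hupL : ∀ {a b : ℝ}, a ≤ b → a ∈ SL → b ∈ SL := by
    intro a b hab ha
    exact summable_rpow_of_le hlpos hlle hab ha
  have hupP : ∀ {a b : ℝ}, a ≤ b → a ∈ SP → b ∈ SP := by
    intro a b hab ha
    obtain ⟨h1, h2⟩ := (hSPiff a).1 ha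
    exact (hSPiff b).2 ⟨hupL hab h1, hupμ hab h2⟩
  -- nonemptiness
  have hSμne : Sμ.Nonempty := by simp only [hSμ, Set.Nonempty, Set.mem_setOf_eq]; exact hD₀fin
  have hSLne : SL.Nonempty := ⟨1, by simp only [hSL, Set.mem_setOf_eq, Real.rpow_one]; exact hlsum⟩
  -- lower bounds
  have hbddμ : BddBelow Sμ := ⟨0, fun σ hσ =>
    nonneg_of_summable_rpow hνpos hνle (hσ.congr (hνeq σ))⟩
  have hbddL : BddBelow SL := ⟨0, fun σ hσ => nonneg_of_summable_rpow hlpos hlle hσ⟩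
  -- membership above the infima
  have hmemμ : ∀ {σ : ℝ}, D₀ < σ → σ ∈ Sμ := fun {σ} h =>
    mem_of_csInf_lt hSμne hupμ (hD₀ ▸ h)
  have hmemL : ∀ {σ : ℝ}, DL < σ → σ ∈ SL := fun {σ} h =>
    mem_of_csInf_lt hSLne hupL (hDL ▸ h)
  constructor
  · -- the factorization
    intro s hs
    have hsμ : s.re ∈ Sμ := hmemμ (lt_of_le_of_lt (le_max_left _ _) hs)
    have hsL : s.re ∈ SL := hmemL (lt_of_le_of_lt (le_max_right _ _) hs)
    have hre : (-s / 2).re = -s.re / 2 := by simp [Complex.div_re]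
    -- complex term identity
    have hcterm : ∀ j k : ℕ, (((lam j ^ (-(2 : ℝ)) * μ k : ℝ)) : ℂ) ^ (-s / 2)
        = ((lam j : ℝ) : ℂ) ^ s * ((μ k : ℝ) : ℂ) ^ (-s / 2) := by
      intro j k
      rw [Complex.ofReal_mul,
        Complex.mul_cpow_ofReal_nonneg (Real.rpow_pos_of_pos (hlpos j) _).le (hμpos k).le,
        Complex.ofReal_cpow (hlpos j).le]
      congr 1
      have him : (Complex.log ((lam j : ℝ) : ℂ) * ((-(2 : ℝ) : ℝ) : ℂ)).im = 0 := by
        rw [← Complex.ofReal_log (hlpos j).le, ← Complex.ofReal_mul]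
        exact Complex.ofReal_im _
      rw [← Complex.cpow_mul _ (by rw [him]; exact neg_neg_iff_pos.2 Real.pi_pos)
        (by rw [him]; exact Real.pi_pos.le)]
      congr 1
      push_cast
      ring
    -- norms
    have hnorm : ∀ j k : ℕ, ‖((lam j : ℝ) : ℂ) ^ s * ((μ k : ℝ) : ℂ) ^ (-s / 2)‖
        = lam j ^ s.re * μ k ^ (-s.re / 2) := by
      intro j k
      rw [norm_mul,
        Complex.norm_cpow_eq_rpow_re_of_pos (hlpos j),
        Complex.norm_cpow_eq_rpow_re_of_pos (hμpos k), hre]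
    have hsum2 : Summable fun p : ℕ × ℕ => lam p.1 ^ s.re * μ p.2 ^ (-s.re / 2) :=
      hsL.mul_of_nonneg hsμ (fun j => (Real.rpow_pos_of_pos (hlpos j) _).le)
        (fun k => (Real.rpow_pos_of_pos (hμpos k) _).le)
    have hFsum : Summable fun p : ℕ × ℕ =>
        ((lam p.1 : ℝ) : ℂ) ^ s * ((μ p.2 : ℝ) : ℂ) ^ (-s / 2) :=
      Summable.of_norm (hsum2.congr fun p => (hnorm p.1 p.2).symm)
    have hGsum : Summable fun k : ℕ => ((μ k : ℝ) : ℂ) ^ (-s / 2) := by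
      apply Summable.of_norm
      have : ∀ k : ℕ, ‖((μ k : ℝ) : ℂ) ^ (-s / 2)‖ = μ k ^ (-s.re / 2) := fun k => by
        rw [Complex.norm_cpow_eq_rpow_re_of_pos (hμpos k), hre]
      exact hsμ.congr fun k => (this k).symm
    calc ∑' p : ℕ × ℕ, (((lam p.1 ^ (-(2 : ℝ)) * μ p.2 : ℝ)) : ℂ) ^ (-s / 2)
        = ∑' p : ℕ × ℕ, ((lam p.1 : ℝ) : ℂ) ^ s * ((μ p.2 : ℝ) : ℂ) ^ (-s / 2) :=
          tsum_congr fun p => hcterm p.1 p.2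
      _ = ∑' j : ℕ, ∑' k : ℕ, ((lam j : ℝ) : ℂ) ^ s * ((μ k : ℝ) : ℂ) ^ (-s / 2) :=
          Summable.tsum_prod' hFsum fun j => hGsum.mul_left (((lam j : ℝ) : ℂ) ^ s)
      _ = ∑' j : ℕ, ((lam j : ℝ) : ℂ) ^ s * ∑' k : ℕ, ((μ k : ℝ) : ℂ) ^ (-s / 2) :=
          tsum_congr fun j => tsum_mul_left
      _ = (∑' j : ℕ, ((lam j : ℝ) : ℂ) ^ s) * ∑' k : ℕ, ((μ k : ℝ) : ℂ) ^ (-s / 2) :=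
          tsum_mul_right
      _ = (∑' k : ℕ, ((μ k : ℝ) : ℂ) ^ (-s / 2)) * ∑' j : ℕ, ((lam j : ℝ) : ℂ) ^ s :=
          mul_comm _ _
  · -- the abscissa of convergence
    have hSPmem : ∀ {σ : ℝ}, max D₀ DL < σ → σ ∈ SP := by
      intro σ h
      exact (hSPiff σ).2 ⟨hmemL (lt_of_le_of_lt (le_max_right _ _) h),
        hmemμ (lt_of_le_of_lt (le_max_left _ _) h)⟩
    have hSPne : SP.Nonempty := ⟨max D₀ DL + 1, hSPmem (by linarith)⟩
    have hbddP : BddBelow SP := ⟨0, fun σ hσ =>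
      nonneg_of_summable_rpow hlpos hlle ((hSPiff σ).1 hσ).1⟩
    apply le_antisymm
    · apply le_of_forall_pos_le_add
      intro ε hε
      exact csInf_le hbddP (hSPmem (by linarith))
    · apply max_le
      · rw [hD₀]
        exact csInf_le_csInf hbddμ hSPne fun σ hσ => ((hSPiff σ).1 hσ).2
      · rw [hDL]
        exact csInf_le_csInf hbddL hSPne fun σ hσ => ((hSPiff σ).1 hσ).1
end
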